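/- Let γ : ℝ → ℝ³ be a twice continuously differentiable curve and u : ℝ → ℝ³ a continuous map such that γ̈(t) = -‖γ̇(t)‖² γ(t) + u(t) and ⟨u(t), γ(t)⟩ = 0 for all t. If ‖γ(0)‖ = 1 and ⟨γ(0), γ̇(0)⟩ = 0, then ‖γ(t)‖ = 1 for all t ∈ ℝ, i.e. the controlled spherical pendulum trajectory remains on the unit sphere S². -/

import Mathlib

open RealInnerProductSpace Set

private lemma pendulum_gronwall_aux {F : ℝ → ℝ × ℝ} {c₁ c₂ : ℝ → ℝ}
    (hc₁ : Continuous c₁) (hc₂ : Continuous c₂)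
    (hF : ∀ t, HasDerivAt F (c₁ t * (F t).2, c₂ t * (F t).1) t)
    (h0 : F 0 = 0) {T : ℝ} (hT : 0 ≤ T) : F T = 0 := by
  have hFc : Continuous F := by
    refine continuous_iff_continuousAt.mpr fun t => (hF t).continuousAt
  obtain ⟨C, hC⟩ := (isCompact_Icc (a := (0:ℝ)) (b := T)).exists_bound_of_continuousOn
      ((hc₁.abs.add hc₂.abs).continuousOn)
  have hC0 : 0 ≤ C := le_trans (add_nonneg (abs_nonneg _) (abs_nonneg _)) <|
    le_trans (le_abs_self _) (hC 0 (by simp [hT]))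
  have key := norm_le_gronwallBound_of_norm_deriv_right_le (E := ℝ × ℝ)
      (f := F) (f' := fun t => (c₁ t * (F t).2, c₂ t * (F t).1))
      (δ := 0) (K := C) (ε := 0) (a := 0) (b := T)
      hFc.continuousOn (fun t _ => (hF t).hasDerivWithinAt)
      (by simp [h0]) ?_
  · have := key T (by simp [hT])
    rw [gronwallBound_ε0_δ0] at this
    exact norm_le_zero_iff.mp this
  · intro t ht
    have ht' : t ∈ Icc (0:ℝ) T := ⟨ht.1, ht.2.le⟩
    have hb := hC t ht'
    rw [Real.norm_eq_abs, Pi.add_apply, abs_of_nonneg (add_nonneg (abs_nonneg _) (abs_nonneg _))] at hb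
    have hb₁ : |c₁ t| ≤ C := le_trans (le_add_of_nonneg_right (abs_nonneg _)) hb
    have hb₂ : |c₂ t| ≤ C := le_trans (le_add_of_nonneg_left (abs_nonneg _)) hb
    rw [Prod.norm_def, Prod.norm_def]
    simp only [Real.norm_eq_abs, abs_mul, add_zero]
    apply max_le
    · calc |c₁ t| * |(F t).2| ≤ C * |(F t).2| :=
            mul_le_mul_of_nonneg_right hb₁ (abs_nonneg _)
        _ ≤ C * max |(F t).1| |(F t).2| :=
            mul_le_mul_of_nonneg_left (le_max_right _ _) hC0
    · calc |c₂ t| * |(F t).1| ≤ C * |(F t).1| :=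
            mul_le_mul_of_nonneg_right hb₂ (abs_nonneg _)
        _ ≤ C * max |(F t).1| |(F t).2| :=
            mul_le_mul_of_nonneg_left (le_max_left _ _) hC0

/-- The controlled spherical pendulum stays on the sphere: if a C² curve γ in ℝ³
satisfies γ̈(t) = -‖γ̇(t)‖² γ(t) + u(t) with a continuous force u(t) orthogonal to
γ(t) for all t, and the initial state lies on the tangent bundle of S²
(‖γ(0)‖ = 1, ⟨γ(0), γ̇(0)⟩ = 0), then ‖γ(t)‖ = 1 for all t. -/
theorem spherical_pendulum_stays_on_sphere (γ u : ℝ → EuclideanSpace ℝ (Fin 3))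
    (hγ : ContDiff ℝ 2 γ) (hu : Continuous u)
    (hode : ∀ t, deriv (deriv γ) t = -‖deriv γ t‖ ^ 2 • γ t + u t)
    (horth : ∀ t, ⟪u t, γ t⟫ = 0)
    (h0 : ‖γ 0‖ = 1) (h0' : ⟪γ 0, deriv γ 0⟫ = 0) :
    ∀ t, ‖γ t‖ = 1 := by
  have hd1 : Differentiable ℝ γ := hγ.differentiable (by norm_num)
  have hd2 : Differentiable ℝ (deriv γ) := by
    have h21 : ContDiff ℝ ((1 : ℕ) + 1) γ := by exact_mod_cast hγ
    exact ((contDiff_succ_iff_deriv.mp h21).2.2).differentiable (by norm_num)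
  set f : ℝ → ℝ := fun t => ⟪γ t, γ t⟫ - 1 with hf_def
  set g : ℝ → ℝ := fun t => ⟪γ t, deriv γ t⟫ with hg_def
  have hf : ∀ t, HasDerivAt f (2 * g t) t := by
    intro t
    have h := HasDerivAt.inner ℝ (hd1 t).hasDerivAt (hd1 t).hasDerivAt
    have h' : HasDerivAt (fun s => ⟪γ s, γ s⟫)
        (⟪γ t, deriv γ t⟫ + ⟪deriv γ t, γ t⟫) t := h
    have h2 : HasDerivAt f (⟪γ t, deriv γ t⟫ + ⟪deriv γ t, γ t⟫) t := h'.sub_const 1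
    convert h2 using 1
    simp only [hg_def]
    rw [real_inner_comm (deriv γ t) (γ t)]
    ring
  have hg : ∀ t, HasDerivAt g (-‖deriv γ t‖ ^ 2 * f t) t := by
    intro t
    have h := HasDerivAt.inner ℝ (hd1 t).hasDerivAt (hd2 t).hasDerivAt
    have h' : HasDerivAt g (⟪γ t, deriv (deriv γ) t⟫ + ⟪deriv γ t, deriv γ t⟫) t := h
    convert h' using 1
    have hu0 : ⟪γ t, u t⟫ = (0:ℝ) := by rw [real_inner_comm]; exact horth t
    rw [hode t, inner_add_right, real_inner_smul_right, hu0,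
      real_inner_self_eq_norm_sq (deriv γ t)]
    simp only [hf_def]; ring
  set F : ℝ → ℝ × ℝ := fun t => (f t, g t) with hF_def
  have hF : ∀ t, HasDerivAt F (2 * (F t).2, -‖deriv γ t‖ ^ 2 * (F t).1) t :=
    fun t => (hf t).prodMk (hg t)
  have hF0 : F 0 = 0 := by
    have hf0 : f 0 = 0 := by
      simp only [hf_def, real_inner_self_eq_norm_sq, h0]; norm_num
    have hg0 : g 0 = 0 := h0'
    simp [hF_def, hf0, hg0]
  have hcont2 : Continuous fun t => ‖deriv γ t‖ ^ 2 := (hd2.continuous.norm.pow 2)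
  have key : ∀ t, F t = 0 := by
    intro t
    rcases le_or_gt 0 t with ht | ht
    · exact pendulum_gronwall_aux (c₁ := fun _ => 2)
        (c₂ := fun t => -‖deriv γ t‖ ^ 2) continuous_const hcont2.neg hF hF0 ht
    · set G : ℝ → ℝ × ℝ := fun s => F (-s) with hG_def
      have hG : ∀ s, HasDerivAt G ((-2 : ℝ) * (G s).2, ‖deriv γ (-s)‖ ^ 2 * (G s).1) s := by
        intro s
        have h := (hF (-s)).scomp s (hasDerivAt_neg s)
        refine h.congr_deriv ?_
        simp only [hG_def, Prod.smul_def, smul_eq_mul, Prod.mk.injEq]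
        constructor <;> ring
      have := pendulum_gronwall_aux (c₁ := fun _ => (-2 : ℝ))
        (c₂ := fun s => ‖deriv γ (-s)‖ ^ 2) continuous_const
        (hcont2.comp continuous_neg) hG (by simp [hG_def, hF0]) (T := -t) (by linarith)
      simpa [hG_def] using this
  intro t
  have hft : f t = 0 := by
    have h := congrArg Prod.fst (key t)
    simpa [hF_def] using h
  have h2 : ‖γ t‖ ^ 2 = 1 := by
    simp only [hf_def] at hft
    have : ⟪γ t, γ t⟫ = 1 := by linarith
    rwa [real_inner_self_eq_norm_sq] at this
  nlinarith [norm_nonneg (γ t)]
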